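/- Let $g : \mathbb{R}^d \to \mathbb{R}$ be twice continuously differentiable, let $x^*, x \in \mathbb{R}^d$ with $g(x) \le g(x^*)$, and suppose that for all $y$ on the segment between $x^*$ and $x$, the Hessian satisfies $w^T \nabla^2 g(y) w \ge \mu \|w\|^2$ for all $w$ in a linear subspace $V$ containing $x - x^*$, where $\mu > 0$. Then $\|\nabla g(x^*)\| \ge \frac{\mu}{2} \|x - x^*\|$. -/

import Mathlib

open Set

/-- Restricted strong convexity along the segment between a point `x*` and a point `x`
with `g x ≤ g x*` implies that the gradient norm at `x*` dominates the distance: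
`‖∇g(x*)‖ ≥ (μ/2) ‖x - x*‖`. -/
theorem grad_norm_ge_of_restricted_strong_convexity {d : ℕ}
    (g : EuclideanSpace ℝ (Fin d) → ℝ) (hg : ContDiff ℝ 2 g)
    (xstar x : EuclideanSpace ℝ (Fin d)) (hle : g x ≤ g xstar)
    (V : Submodule ℝ (EuclideanSpace ℝ (Fin d))) (hV : x - xstar ∈ V)
    (μ : ℝ) (hμ : 0 < μ)
    (hhess : ∀ y ∈ segment ℝ xstar x, ∀ w ∈ V,
      μ * ‖w‖ ^ 2 ≤ iteratedFDeriv ℝ 2 g y ![w, w]) :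
    μ / 2 * ‖x - xstar‖ ≤ ‖gradient g xstar‖ := by
  set v := x - xstar with hv
  by_cases hv0 : v = 0
  · simp [hv0]
  have hvpos : 0 < ‖v‖ := norm_pos_iff.mpr hv0
  set c : ℝ → EuclideanSpace ℝ (Fin d) := fun t => xstar + t • v with hc
  set φ : ℝ → ℝ := fun t => g (c t) with hφdef
  have hgdiff : Differentiable ℝ g := hg.differentiable (by norm_num)
  have hcderiv : ∀ t : ℝ, HasDerivAt c v t := by
    intro t
    exact (((hasDerivAt_id t).smul_const v).const_add xstar).congr_deriv (one_smul ℝ v)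
  have hφ' : ∀ t : ℝ, HasDerivAt φ ((fderiv ℝ g (c t)) v) t := by
    intro t
    exact ((hgdiff (c t)).hasFDerivAt).comp_hasDerivAt t (hcderiv t)
  have hderivφ : deriv φ = fun t => (fderiv ℝ g (c t)) v :=
    funext fun t => (hφ' t).deriv
  have hg1 : ContDiff ℝ 1 (fderiv ℝ g) := hg.fderiv_right (m := 1) (by norm_num)
  have hg1diff : Differentiable ℝ (fderiv ℝ g) := hg1.differentiable one_ne_zero
  set F := fderiv ℝ (fderiv ℝ g) with hF
  have hφ'' : ∀ t : ℝ, HasDerivAt (deriv φ) ((F (c t)) v v) t := by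
    intro t
    rw [hderivφ]
    have h1 : HasDerivAt (fun s => fderiv ℝ g (c s)) ((F (c t)) v) t :=
      ((hg1diff (c t)).hasFDerivAt).comp_hasDerivAt t (hcderiv t)
    simpa using h1.clm_apply (hasDerivAt_const t v)
  have hseg : ∀ t ∈ Icc (0:ℝ) 1, c t ∈ segment ℝ xstar x := by
    intro t ht
    rw [segment_eq_image']
    exact ⟨t, ht, rfl⟩
  have huD : UniqueDiffOn ℝ (Icc (0:ℝ) 1) := uniqueDiffOn_Icc zero_lt_one
  have hφC : ContDiff ℝ 2 φ := by
    apply hg.comp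
    exact contDiff_const.add (contDiff_id.smul contDiff_const)
  -- derivWithin φ agrees with deriv φ on Icc
  have hdW : ∀ t ∈ Icc (0:ℝ) 1, derivWithin φ (Icc 0 1) t = deriv φ t := fun t ht =>
    (hφ' t).differentiableAt.derivWithin (huD t ht)
  have hiter1 : ∀ t ∈ Icc (0:ℝ) 1,
      iteratedDerivWithin 1 φ (Icc 0 1) t = deriv φ t := by
    intro t ht
    rw [iteratedDerivWithin_one]
    exact hdW t ht
  have hdiffOn : DifferentiableOn ℝ (iteratedDerivWithin 1 φ (Icc 0 1)) (Ioo 0 1) := by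
    have hd : DifferentiableOn ℝ (deriv φ) (Ioo 0 1) :=
      fun t _ => ((hφ'' t).differentiableAt).differentiableWithinAt
    exact hd.congr (fun t ht => hiter1 t (Ioo_subset_Icc_self ht))
  have hT := taylor_mean_remainder_lagrange (f := φ) (n := 1) (x₀ := 0) (x := 1) zero_ne_one
  rw [uIcc_of_le zero_le_one, uIoo_of_le zero_le_one] at hT
  obtain ⟨ξ, hξ, hTaylor⟩ := hT ((hφC.of_le one_le_two).contDiffOn) hdiffOn
  have hξI : ξ ∈ Icc (0:ℝ) 1 := Ioo_subset_Icc_self hξ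
  -- compute the second iterated derivative within at ξ
  have hiter2 : iteratedDerivWithin 2 φ (Icc 0 1) ξ = (F (c ξ)) v v := by
    rw [iteratedDerivWithin_succ,
      derivWithin_congr (fun t ht => hiter1 t ht) (hiter1 ξ hξI),
      (hφ'' ξ).differentiableAt.derivWithin (huD ξ hξI)]
    exact (hφ'' ξ).deriv
  -- compute the Taylor polynomial at order 1
  have hTP : taylorWithinEval φ 1 (Icc 0 1) 0 1 = φ 0 + deriv φ 0 := by
    rw [taylor_within_apply]
    simp [Finset.sum_range_succ, iteratedDerivWithin_one,
      hdW 0 (by norm_num)]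
  have hc0 : c 0 = xstar := by simp [hc]
  have hc1 : c 1 = x := by simp [hc, hv]
  have hhb : μ * ‖v‖ ^ 2 ≤ (F (c ξ)) v v := by
    have := hhess (c ξ) (hseg ξ hξI) v hV
    rwa [iteratedFDeriv_two_apply] at this
  have hkey : deriv φ 0 + μ * ‖v‖ ^ 2 / 2 ≤ 0 := by
    have h1 : φ 1 - (φ 0 + deriv φ 0) = (F (c ξ)) v v / 2 := by
      rw [← hTP, hTaylor, hiter2]
      norm_num
    have h2 : φ 1 ≤ φ 0 := by
      simp only [hφdef, hc0, hc1]
      exact hle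
    nlinarith
  have hfd : deriv φ 0 = (fderiv ℝ g xstar) v := by
    rw [hderivφ]; simp [hc0]
  have hgradnorm : ‖gradient g xstar‖ = ‖fderiv ℝ g xstar‖ := by
    rw [gradient, LinearIsometryEquiv.norm_map]
  have hbound : μ * ‖v‖ ^ 2 / 2 ≤ ‖fderiv ℝ g xstar‖ * ‖v‖ := by
    have h3 : -(fderiv ℝ g xstar v) ≤ ‖fderiv ℝ g xstar‖ * ‖v‖ := by
      calc -(fderiv ℝ g xstar v) ≤ |fderiv ℝ g xstar v| := (le_abs_self _).trans_eq (abs_neg _)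
        _ = ‖fderiv ℝ g xstar v‖ := rfl
        _ ≤ ‖fderiv ℝ g xstar‖ * ‖v‖ := (fderiv ℝ g xstar).le_opNorm v
    rw [hfd] at hkey
    linarith
  rw [hgradnorm]
  have := mul_le_mul_of_nonneg_right hbound (le_of_lt (inv_pos.mpr hvpos))
  calc μ / 2 * ‖v‖ = (μ * ‖v‖ ^ 2 / 2) * ‖v‖⁻¹ := by
        field_simp
    _ ≤ (‖fderiv ℝ g xstar‖ * ‖v‖) * ‖v‖⁻¹ := this
    _ = ‖fderiv ℝ g xstar‖ := by field_simp
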